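/- Let X be a finite set, π a stochastic matrix on X, and L(π) the set of islands of π. Let p and q be probability distributions on X such that for every island c with p(c) > 0 one has q(c) > 0 and the conditional distributions agree: p^c = q^c (and supp p ⊆ supp q). Then the mismatch cost vanishes: D(p‖q) − D(πp‖πq) = 0. -/

import Mathlib

/-- The relation whose equivalence classes (under transitive/equivalence
closure) are the islands of the stochastic matrix `π`:
`x ~ x'` iff there is `x''` with `π(x''|x) > 0` and `π(x''|x') > 0`. -/
def islandRel {X : Type*} (π : X → X → ℝ) (a b : X) : Prop :=
  ∃ z, 0 < π a z ∧ 0 < π b z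

/-- The island of `π` containing `x0`. -/
def islandOf {X : Type*} (π : X → X → ℝ) (x0 : X) : Set X :=
  {x | Relation.EqvGen (islandRel π) x x0}

/-- KL divergence between two distributions on a finite set. -/
noncomputable def klDiv' {X : Type*} [Fintype X] (p q : X → ℝ) : ℝ :=
  ∑ x, p x * Real.log (p x / q x)

lemma islandOf_eq_of_eqvGen {X : Type*} (π : X → X → ℝ) {a b : X}
    (h : Relation.EqvGen (islandRel π) a b) : islandOf π a = islandOf π b := by
  ext z
  constructor
  · intro hz; exact Relation.EqvGen.trans z a b hz h
  · intro hz; exact Relation.EqvGen.trans z b a hz (Relation.EqvGen.symm a b h)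

/-- if on every island `c` with `p(c) > 0` one has `q(c) > 0` and
`p^c = q^c`, then the mismatch cost `D(p‖q) − D(πp‖πq)` vanishes. -/
theorem mismatch_cost_zero_matched_prior
    {X : Type*} [Fintype X]
    (π : X → X → ℝ) (p q : X → ℝ)
    (hπ : ∀ x y, 0 ≤ π x y) (hπrow : ∀ x, ∑ y, π x y = 1)
    (hp : ∀ x, 0 ≤ p x) (hpsum : ∑ x, p x = 1)
    (hq : ∀ x, 0 ≤ q x) (hqsum : ∑ x, q x = 1)
    (hsupp : ∀ x, q x = 0 → p x = 0)
    (hmatch : ∀ x0 : X,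
      0 < ∑ x, (islandOf π x0).indicator p x →
        0 < ∑ x, (islandOf π x0).indicator q x ∧
        ∀ x ∈ islandOf π x0,
          p x * (∑ y, (islandOf π x0).indicator q y) =
            q x * (∑ y, (islandOf π x0).indicator p y)) :
    klDiv' p q
      - klDiv' (fun y => ∑ x, π x y * p x) (fun y => ∑ x, π x y * q x) = 0 := by
  classical
  set lam : X → ℝ := fun x =>
    (∑ y, (islandOf π x).indicator p y) / (∑ y, (islandOf π x).indicator q y) with hlam
  have hmemself : ∀ x : X, x ∈ islandOf π x := fun x => Relation.EqvGen.refl x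
  -- lam is constant on islands
  have hlamconst : ∀ a b : X, Relation.EqvGen (islandRel π) a b → lam a = lam b := by
    intro a b h
    simp only [hlam, islandOf_eq_of_eqvGen π h]
  -- Lemma A : p x = lam x * q x
  have hA : ∀ x, p x = lam x * q x := by
    intro x
    by_cases hP : 0 < ∑ y, (islandOf π x).indicator p y
    · obtain ⟨hQ, hmx⟩ := hmatch x hP
      have hx := hmx x (hmemself x)
      have hQ' : (∑ y, (islandOf π x).indicator q y) ≠ 0 := ne_of_gt hQ
      rw [hlam]; dsimp only; rw [div_mul_eq_mul_div, eq_div_iff hQ']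
      linarith [hx]
    · have hnn : ∀ y ∈ Finset.univ, 0 ≤ (islandOf π x).indicator p y := fun y _ =>
        Set.indicator_nonneg (fun z _ => hp z) y
      have hP0 : (∑ y, (islandOf π x).indicator p y) = 0 :=
        le_antisymm (not_lt.1 hP) (Finset.sum_nonneg hnn)
      have hpx : p x = 0 := by
        have h0 := (Finset.sum_eq_zero_iff_of_nonneg hnn).1 hP0 x (Finset.mem_univ x)
        rwa [Set.indicator_of_mem (hmemself x)] at h0
      simp [hlam, hpx, hP0]
  -- Lemma C : per-point KL term
  have hC : ∀ x, p x * Real.log (p x / q x) = p x * Real.log (lam x) := by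
    intro x
    by_cases hpx : p x = 0
    · simp [hpx]
    · have hqx : q x ≠ 0 := fun h => hpx (hsupp x h)
      have : p x / q x = lam x := by
        rw [hA x]; field_simp
      rw [this]
  -- Lemma D : per-point KL term of pushforwards
  have hD : ∀ y, (∑ x, π x y * p x) * Real.log ((∑ x, π x y * p x) / (∑ x, π x y * q x))
      = ∑ x, (π x y * p x) * Real.log (lam x) := by
    intro y
    have hnnp : ∀ x ∈ Finset.univ, 0 ≤ π x y * p x := fun x _ =>
      mul_nonneg (hπ x y) (hp x)
    by_cases hPp : (∑ x, π x y * p x) = 0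
    · have hterm := (Finset.sum_eq_zero_iff_of_nonneg hnnp).1 hPp
      rw [hPp, zero_mul]
      refine (Finset.sum_eq_zero ?_).symm
      intro x _
      rw [hterm x (Finset.mem_univ x), zero_mul]
    · -- pick x0 with π x0 y * p x0 ≠ 0
      obtain ⟨x0, -, hx0⟩ := Finset.exists_ne_zero_of_sum_ne_zero hPp
      have hπx0 : 0 < π x0 y := by
        rcases lt_or_eq_of_le (hπ x0 y) with h | h
        · exact h
        · exact absurd (by rw [← h, zero_mul]) hx0
      -- all x with π x y ≠ 0 have lam x = lam x0
      have hlameq : ∀ x, π x y ≠ 0 → lam x = lam x0 := by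
        intro x hx
        have hπx : 0 < π x y := lt_of_le_of_ne (hπ x y) (Ne.symm hx)
        exact hlamconst x x0 (Relation.EqvGen.rel x x0 ⟨y, hπx, hπx0⟩)
      -- Pp = lam x0 * Pq
      have hkey : (∑ x, π x y * p x) = lam x0 * (∑ x, π x y * q x) := by
        rw [Finset.mul_sum]
        refine Finset.sum_congr rfl ?_
        intro x _
        by_cases hx : π x y = 0
        · simp [hx]
        · rw [hA x, hlameq x hx]; ring
      have hPq : (∑ x, π x y * q x) ≠ 0 := by
        intro h; exact hPp (by rw [hkey, h, mul_zero])
      have hratio : (∑ x, π x y * p x) / (∑ x, π x y * q x) = lam x0 := by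
        rw [hkey, mul_div_assoc, div_self hPq, mul_one]
      rw [hratio]
      have hRHS : ∀ x ∈ Finset.univ, (π x y * p x) * Real.log (lam x)
          = (π x y * p x) * Real.log (lam x0) := by
        intro x _
        by_cases hx : π x y = 0
        · simp [hx]
        · rw [hlameq x hx]
      rw [Finset.sum_congr rfl hRHS, ← Finset.sum_mul]
  -- put it together
  have h1 : klDiv' p q = ∑ x, p x * Real.log (lam x) :=
    Finset.sum_congr rfl (fun x _ => hC x)
  have h2 : klDiv' (fun y => ∑ x, π x y * p x) (fun y => ∑ x, π x y * q x)
      = ∑ y, ∑ x, (π x y * p x) * Real.log (lam x) :=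
    Finset.sum_congr rfl (fun y _ => hD y)
  rw [h1, h2, Finset.sum_comm]
  have h3 : ∀ x, (∑ y, (π x y * p x) * Real.log (lam x)) = p x * Real.log (lam x) := by
    intro x
    have : ∀ y, (π x y * p x) * Real.log (lam x) = π x y * (p x * Real.log (lam x)) :=
      fun y => by ring
    simp_rw [this]
    rw [← Finset.sum_mul, hπrow, one_mul]
  rw [Finset.sum_congr rfl (fun x _ => h3 x), sub_self]
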